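/- Let ψ be an n-qubit state, and for each i ∈ Fin n let U_i be a 2×2 unitary matrix. Define the n-qubit state ψ' by ψ' x = ∑_y (∏_i (U_i)_{x i, y i}) · ψ y (i.e. ψ' is obtained from ψ by applying the local unitary U_1 ⊗ ⋯ ⊗ U_n). Then Λ_max(ψ') = Λ_max(ψ), and hence E_G(ψ') = E_G(ψ). (This is the content of Lemma 1: all toric code eigenstates |φ,c,i,j⟩, obtained from a reference ground state by applying tensor products of Pauli matrices and string operators, have the same geometric entanglement.) -/

import Mathlib

open scoped BigOperators
open scoped Classical

noncomputable section

namespace GeomEnt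

/-- The ℓ² inner product of two n-qubit amplitude functions. -/
def qInner {n : ℕ} (φ ψ : (Fin n → ZMod 2) → ℂ) : ℂ :=
  ∑ x : Fin n → ZMod 2, (starRingEnd ℂ) (φ x) * ψ x

/-- An n-qubit state: a normalized amplitude function. -/
def IsState {n : ℕ} (ψ : (Fin n → ZMod 2) → ℂ) : Prop :=
  ∑ x : Fin n → ZMod 2, ‖ψ x‖ ^ 2 = 1

/-- A product state of the n single qubits. -/
def IsProductState {n : ℕ} (Φ : (Fin n → ZMod 2) → ℂ) : Prop :=
  ∃ φ : Fin n → ZMod 2 → ℂ,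
    (∀ i, ‖φ i 0‖ ^ 2 + ‖φ i 1‖ ^ 2 = 1) ∧
    ∀ x, Φ x = ∏ i, φ i (x i)

/-- Maximal overlap with product states. -/
def LambdaMax {n : ℕ} (ψ : (Fin n → ZMod 2) → ℂ) : ℝ :=
  sSup { r : ℝ | ∃ Φ, IsProductState Φ ∧ r = ‖qInner Φ ψ‖ }

/-- Geometric entanglement. -/
def EG {n : ℕ} (ψ : (Fin n → ZMod 2) → ℂ) : ℝ :=
  - Real.logb 2 (LambdaMax ψ ^ 2)

lemma sum_zmod2 (f : ZMod 2 → ℂ) : ∑ b : ZMod 2, f b = f 0 + f 1 := by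
  have h : (Finset.univ : Finset (ZMod 2)) = {0, 1} := rfl
  rw [h, Finset.sum_insert (by decide), Finset.sum_singleton]

lemma overlap_subset {n : ℕ} (ψ ψ' : (Fin n → ZMod 2) → ℂ)
    (V : Fin n → Matrix (ZMod 2) (ZMod 2) ℂ)
    (hV : ∀ i, V i ∈ Matrix.unitaryGroup (ZMod 2) ℂ)
    (hψ' : ∀ x, ψ' x = ∑ y : Fin n → ZMod 2, (∏ i, V i (x i) (y i)) * ψ y) :
    { r : ℝ | ∃ Φ, IsProductState Φ ∧ r = ‖qInner Φ ψ'‖ } ⊆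
    { r : ℝ | ∃ Φ, IsProductState Φ ∧ r = ‖qInner Φ ψ‖ } := by
  rintro r ⟨Φ, ⟨φ, hnorm, hΦ⟩, rfl⟩
  set φ' : Fin n → ZMod 2 → ℂ :=
    fun i b => ∑ a : ZMod 2, φ i a * (starRingEnd ℂ) (V i a b) with hφ'def
  have hVV : ∀ i (a c : ZMod 2),
      ∑ b : ZMod 2, V i a b * (starRingEnd ℂ) (V i c b) = if a = c then 1 else 0 := by
    intro i a c
    have h1 : V i * star (V i) = 1 := (Matrix.mem_unitaryGroup_iff).mp (hV i)
    have h2 : (V i * star (V i)) a c = (1 : Matrix (ZMod 2) (ZMod 2) ℂ) a c := by rw [h1]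
    simpa [Matrix.mul_apply, Matrix.one_apply, Matrix.conjTranspose_apply, Matrix.star_apply]
      using h2
  refine ⟨fun y => ∏ i, φ' i (y i), ⟨φ', ?_, fun _ => rfl⟩, ?_⟩
  · intro i
    have key : ∑ b : ZMod 2, ((‖φ' i b‖ ^ 2 : ℝ) : ℂ)
        = ∑ a : ZMod 2, ((‖φ i a‖ ^ 2 : ℝ) : ℂ) := by
      have e1 : ∀ z : ℂ, ((‖z‖ ^ 2 : ℝ) : ℂ) = z * (starRingEnd ℂ) z := by
        intro z; rw [Complex.sq_norm, Complex.mul_conj]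
      simp only [e1]
      have expand : ∀ b, φ' i b * (starRingEnd ℂ) (φ' i b)
          = ∑ a : ZMod 2, ∑ c : ZMod 2,
              (φ i a * (starRingEnd ℂ) (φ i c)) * (V i c b * (starRingEnd ℂ) (V i a b)) := by
        intro b
        rw [hφ'def]
        simp only [map_sum, map_mul, Complex.conj_conj]
        rw [Finset.sum_mul_sum]
        exact Finset.sum_congr rfl fun a _ => Finset.sum_congr rfl fun c _ => by ring
      simp only [expand]
      rw [Finset.sum_comm]
      calc ∑ a : ZMod 2, ∑ b : ZMod 2, ∑ c : ZMod 2,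
              (φ i a * (starRingEnd ℂ) (φ i c)) * (V i c b * (starRingEnd ℂ) (V i a b))
          = ∑ a : ZMod 2, ∑ c : ZMod 2,
              (φ i a * (starRingEnd ℂ) (φ i c)) *
                ∑ b : ZMod 2, (V i c b * (starRingEnd ℂ) (V i a b)) := by
            refine Finset.sum_congr rfl fun a _ => ?_
            rw [Finset.sum_comm]
            exact Finset.sum_congr rfl fun c _ => (Finset.mul_sum _ _ _).symm
        _ = ∑ a : ZMod 2, φ i a * (starRingEnd ℂ) (φ i a) := by
            refine Finset.sum_congr rfl fun a _ => ?_
            simp only [hVV, mul_ite, mul_one, mul_zero]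
            rw [Finset.sum_ite_eq' Finset.univ a
              (fun c => φ i a * (starRingEnd ℂ) (φ i c))]
            simp
    have key' : ‖φ' i 0‖ ^ 2 + ‖φ' i 1‖ ^ 2
        = ‖φ i 0‖ ^ 2 + ‖φ i 1‖ ^ 2 := by
      have := key
      rw [sum_zmod2, sum_zmod2] at this
      exact_mod_cast this
    rw [key', hnorm i]
  · have main : qInner (fun y => ∏ i, φ' i (y i)) ψ = qInner Φ ψ' := by
      unfold qInner
      have e2 : ∀ y : Fin n → ZMod 2,
          (starRingEnd ℂ) (∏ i, φ' i (y i))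
            = ∑ x : Fin n → ZMod 2, ∏ i, ((starRingEnd ℂ) (φ i (x i)) * V i (x i) (y i)) := by
        intro y
        rw [map_prod]
        have : ∀ i, (starRingEnd ℂ) (φ' i (y i))
            = ∑ a : ZMod 2, (starRingEnd ℂ) (φ i a) * V i a (y i) := by
          intro i
          rw [hφ'def]
          simp [map_sum, map_mul]
        simp only [this]
        rw [Finset.prod_univ_sum, Fintype.piFinset_univ]
      simp only [e2, Finset.sum_mul, hψ', Finset.mul_sum]
      rw [Finset.sum_comm]
      refine Finset.sum_congr rfl fun x _ => Finset.sum_congr rfl fun y _ => ?_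
      rw [hΦ x, map_prod, Finset.prod_mul_distrib]
      ring
    rw [main]

/-- applying a local (tensor product of single-qubit) unitary does not
change the maximal overlap, hence not the geometric entanglement. -/
theorem geometric_entanglement_local_unitary_invariance
    {n : ℕ} (ψ : (Fin n → ZMod 2) → ℂ) (hψ : IsState ψ)
    (U : Fin n → Matrix (ZMod 2) (ZMod 2) ℂ)
    (hU : ∀ i, U i ∈ Matrix.unitaryGroup (ZMod 2) ℂ)
    (ψ' : (Fin n → ZMod 2) → ℂ)
    (hψ' : ∀ x, ψ' x = ∑ y : Fin n → ZMod 2, (∏ i, U i (x i) (y i)) * ψ y) :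
    LambdaMax ψ' = LambdaMax ψ ∧ EG ψ' = EG ψ := by
  have hstar : ∀ i, star (U i) ∈ Matrix.unitaryGroup (ZMod 2) ℂ :=
    fun i => Unitary.star_mem (hU i)
  have hUU : ∀ i (a c : ZMod 2),
      ∑ b : ZMod 2, (star (U i)) a b * U i b c = if a = c then 1 else 0 := by
    intro i a c
    have h1 : star (U i) * star (star (U i)) = 1 :=
      (Matrix.mem_unitaryGroup_iff).mp (hstar i)
    rw [star_star] at h1
    have h2 : (star (U i) * U i) a c = (1 : Matrix (ZMod 2) (ZMod 2) ℂ) a c := by rw [h1]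
    simpa [Matrix.mul_apply, Matrix.one_apply] using h2
  have hψback : ∀ x, ψ x = ∑ y : Fin n → ZMod 2,
      (∏ i, (star (U i)) (x i) (y i)) * ψ' y := by
    intro x
    symm
    calc ∑ y : Fin n → ZMod 2, (∏ i, (star (U i)) (x i) (y i)) * ψ' y
        = ∑ y : Fin n → ZMod 2, ∑ z : Fin n → ZMod 2,
            (∏ i, (star (U i)) (x i) (y i)) * ((∏ i, U i (y i) (z i)) * ψ z) := by
          simp only [hψ', Finset.mul_sum]
      _ = ∑ z : Fin n → ZMod 2,
            (∑ y : Fin n → ZMod 2, ∏ i, ((star (U i)) (x i) (y i) * U i (y i) (z i))) * ψ z := by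
          rw [Finset.sum_comm]
          refine Finset.sum_congr rfl fun z _ => ?_
          rw [Finset.sum_mul]
          refine Finset.sum_congr rfl fun y _ => ?_
          rw [Finset.prod_mul_distrib]
          ring
      _ = ∑ z : Fin n → ZMod 2,
            (∏ i, ∑ b : ZMod 2, (star (U i)) (x i) b * U i b (z i)) * ψ z := by
          refine Finset.sum_congr rfl fun z _ => ?_
          congr 1
          rw [Finset.prod_univ_sum, Fintype.piFinset_univ]
      _ = ∑ z : Fin n → ZMod 2, (if x = z then 1 else 0) * ψ z := by
          refine Finset.sum_congr rfl fun z _ => ?_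
          congr 1
          simp only [hUU]
          by_cases h : x = z
          · subst h; simp
          · rw [if_neg h]
            obtain ⟨i, hi⟩ : ∃ i, x i ≠ z i := by
              by_contra hc; push_neg at hc; exact h (funext hc)
            exact Finset.prod_eq_zero (Finset.mem_univ i) (by simp [hi])
      _ = ψ x := by
          simp only [ite_mul, one_mul, zero_mul]
          rw [Finset.sum_ite_eq]
          simp
  have h1 := overlap_subset ψ ψ' U hU hψ'
  have h2 := overlap_subset ψ' ψ (fun i => star (U i)) hstar hψback
  have hset : { r : ℝ | ∃ Φ, IsProductState Φ ∧ r = ‖qInner Φ ψ'‖ }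
      = { r : ℝ | ∃ Φ, IsProductState Φ ∧ r = ‖qInner Φ ψ‖ } :=
    Set.Subset.antisymm h1 h2
  have hL : LambdaMax ψ' = LambdaMax ψ := by unfold LambdaMax; rw [hset]
  exact ⟨hL, by unfold EG; rw [hL]⟩

end GeomEnt
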